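/- For every n ≥ 1, n! · Σ_{T ∈ PT(n)} ∏_{v ∈ T} (1 - 1/h_v)^{h_v - 1} = (n-1)^{n-1}, where PT(n) is the set of plane trees with n vertices (for n = 1 the right-hand side is 0^0 = 1). -/

import Mathlib

/-- Plane trees: nonempty rooted trees whose subtrees at each vertex are linearly ordered. -/
inductive PTree : Type
  | node : List PTree → PTree

namespace PTree

mutual
/-- The number of vertices of a plane tree. -/
def size : PTree → ℕ
  | .node cs => sizeList cs + 1
/-- The total number of vertices of a plane forest (a list of plane trees). -/
def sizeList : List PTree → ℕ
  | [] => 0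
  | t :: ts => size t + sizeList ts
end

mutual
/-- The multiset of hook lengths of a plane tree: the hook length of a vertex
is the number of its descendants, counting the vertex itself. -/
def hooks : PTree → Multiset ℕ+
  | .node cs => ⟨sizeList cs + 1, Nat.succ_pos _⟩ ::ₘ hooksList cs
/-- The multiset of hook lengths of a plane forest. -/
def hooksList : List PTree → Multiset ℕ+
  | [] => 0
  | t :: ts => hooks t + hooksList ts
end

end PTree

namespace HookAux

open Polynomial Finset

/-! ### The Abel polynomials and an Abel-type binomial identity -/

noncomputable def abelP : ℕ → Polynomial ℚ
  | 0 => 1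
  | n+1 => X * (X + C ((n:ℚ)+1)) ^ n

lemma abelP_deriv (n : ℕ) :
    derivative (abelP (n+1)) = ((n:ℚ)+1) • (abelP n).comp (X + 1) := by
  match n with
  | 0 => simp [abelP]
  | m+1 =>
    simp only [abelP, derivative_mul, derivative_X, one_mul, derivative_pow,
      derivative_add, derivative_C, add_zero, Nat.cast_add, Nat.cast_one]
    rw [mul_comp, pow_comp, X_comp, add_comp, X_comp, C_comp]
    rw [smul_eq_C_mul]
    simp only [map_add, map_one, map_ofNat]
    push_cast
    ring

lemma abelP_eval_zero (n : ℕ) (hn : 1 ≤ n) : (abelP n).eval 0 = 0 := by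
  match n with
  | m+1 => simp [abelP]

lemma abelP_eval_one (n : ℕ) : (abelP n).eval 1 = ((n:ℚ)+1) ^ (n-1) := by
  match n with
  | 0 => simp [abelP]
  | m+1 => simp [abelP]; ring_nf

lemma abelP_eval_neg_one (n : ℕ) (hn : 1 ≤ n) :
    (abelP n).eval (-1) = -(((n:ℚ)-1) ^ (n-1)) := by
  match n with
  | m+1 => simp [abelP]

lemma abelP_binom (n : ℕ) (y : ℚ) :
    (abelP n).comp (X + C y) =
      ∑ k ∈ range (n+1), (n.choose k : ℚ) • (abelP k * C ((abelP (n-k)).eval y)) := by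
  induction n generalizing y with
  | zero => simp [abelP]
  | succ n ih =>
    set L := (abelP (n+1)).comp (X + C y) with hL
    set R := ∑ k ∈ range (n+1+1), ((n+1).choose k : ℚ) •
        (abelP k * C ((abelP (n+1-k)).eval y)) with hR
    set S := ∑ k ∈ range (n+1), (n.choose k : ℚ) •
        (abelP k * C ((abelP (n-k)).eval y)) with hS
    have hcomp : ((X : ℚ[X]) + 1).comp (X + C y) = (X + C y).comp (X + 1) := by
      simp [add_comp]; ring
    have dL : derivative L = ((n:ℚ)+1) • S.comp (X + 1) := by
      rw [hL, derivative_comp, abelP_deriv]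
      have h1 : derivative ((X : ℚ[X]) + C y) = 1 := by simp
      rw [h1, one_mul, smul_comp, comp_assoc, hcomp, ← comp_assoc, ih]
    have dR : derivative R = ((n:ℚ)+1) • S.comp (X + 1) := by
      rw [hR, derivative_sum, Finset.sum_range_succ']
      have h0 : derivative (((n+1).choose 0 : ℚ) •
          (abelP 0 * C ((abelP (n+1-0)).eval y))) = 0 := by
        rw [derivative_smul, show abelP 0 = 1 from rfl, one_mul, derivative_C, smul_zero]
      rw [h0, add_zero, hS, Polynomial.sum_comp, Finset.smul_sum]
      apply Finset.sum_congr rfl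
      intro j hj
      rw [derivative_smul, derivative_mul, derivative_C, mul_zero, add_zero,
        abelP_deriv j, smul_comp, mul_comp, C_comp, Nat.succ_sub_succ,
        smul_mul_assoc, smul_smul, smul_smul]
      congr 1
      have h2 : (n+1) * (n.choose j) = ((n+1).choose (j+1)) * (j+1) :=
        Nat.add_one_mul_choose_eq n j
      have h3 : (((n+1) * (n.choose j) : ℕ) : ℚ) = (((n+1).choose (j+1)) * (j+1) : ℕ) := by
        exact_mod_cast congrArg (Nat.cast : ℕ → ℚ) h2
      push_cast at h3
      linarith
    have hconst : L - R = C ((L - R).coeff 0) := by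
      apply eq_C_of_derivative_eq_zero
      rw [derivative_sub, dL, dR, sub_self]
    have heval0 : (L - R).eval 0 = 0 := by
      rw [eval_sub, hL, eval_comp]
      simp only [eval_add, eval_X, eval_C, zero_add]
      rw [hR, eval_finset_sum, Finset.sum_range_succ']
      simp only [eval_smul, eval_mul, eval_C, smul_eq_mul]
      have hz : ∀ j ∈ range (n+1), ((n+1).choose (j+1) : ℚ) *
          ((abelP (j+1)).eval 0 * (abelP (n+1-(j+1))).eval y) = 0 := by
        intro j hj
        rw [abelP_eval_zero (j+1) (by omega)]
        ring
      rw [Finset.sum_congr rfl hz]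
      simp [abelP]
    have hc0 : (L - R).coeff 0 = 0 := by
      have h := heval0
      rw [hconst, eval_C] at h
      exact h
    have : L - R = 0 := by rw [hconst, hc0, map_zero]
    exact sub_eq_zero.mp this

lemma key_identity (m : ℕ) :
    ∑ j ∈ range (m+1), ((m+1).choose (j+1) : ℚ) * (j:ℚ)^j * (((m-j : ℕ):ℚ)+1)^((m-j)-1)
      = ((m:ℚ)+2)^m := by
  have h := congrArg (eval (-1)) (abelP_binom (m+1) 1)
  rw [eval_comp] at h
  simp only [eval_add, eval_X, eval_C, neg_add_cancel] at h
  rw [abelP_eval_zero (m+1) (by omega), eval_finset_sum] at h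
  rw [Finset.sum_range_succ'] at h
  simp only [eval_smul, eval_mul, eval_C, smul_eq_mul] at h
  have hterm : ∀ j ∈ range (m+1), ((m+1).choose (j+1) : ℚ) *
      ((abelP (j+1)).eval (-1) * (abelP (m+1-(j+1))).eval 1) =
      -(((m+1).choose (j+1) : ℚ) * (j:ℚ)^j * (((m-j : ℕ):ℚ)+1)^((m-j)-1)) := by
    intro j hj
    rw [abelP_eval_neg_one (j+1) (by omega), abelP_eval_one]
    simp only [Nat.succ_sub_succ, Nat.sub_zero]
    push_cast
    ring_nf
  rw [Finset.sum_congr rfl hterm, Finset.sum_neg_distrib] at h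
  have h0 : (((m+1).choose 0 : ℚ)) * ((abelP 0).eval (-1) * (abelP (m+1-0)).eval 1)
      = ((m:ℚ)+2)^m := by
    rw [show abelP 0 = 1 from rfl]
    rw [Nat.sub_zero, abelP_eval_one]
    push_cast
    ring_nf
    simp
  rw [h0] at h
  linarith

/-! ### Finsets of plane trees and plane forests of a given size -/

open PTree

mutual
def decEq : (a b : PTree) → Decidable (a = b)
  | .node cs, .node ds =>
    match decEqList cs ds with
    | isTrue h => isTrue (by rw [h])
    | isFalse h => isFalse (fun he => h (by cases he; rfl))
def decEqList : (a b : List PTree) → Decidable (a = b)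
  | [], [] => isTrue rfl
  | [], _::_ => isFalse (by simp)
  | _::_, [] => isFalse (by simp)
  | a::as, b::bs =>
    match decEq a b, decEqList as bs with
    | isTrue h1, isTrue h2 => isTrue (by rw [h1, h2])
    | isFalse h1, _ => isFalse (by simp [h1])
    | _, isFalse h2 => isFalse (by simp [h2])
end

instance : DecidableEq PTree := decEq

/-- all plane forests with `m` vertices in total -/
def forestsOf : ℕ → Finset (List PTree)
  | 0 => {[]}
  | m+1 => (Finset.range (m+1)).biUnion fun j =>
      (((forestsOf (min j m)).image PTree.node) ×ˢ forestsOf (m - j)).image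
        fun p => p.1 :: p.2
  decreasing_by all_goals omega

/-- all plane trees with `n` vertices -/
def treesOf : ℕ → Finset PTree
  | 0 => ∅
  | m+1 => (forestsOf m).image PTree.node

lemma one_le_size (t : PTree) : 1 ≤ t.size := by
  cases t with | node cs => simp [PTree.size]

lemma mem_forestsOf : ∀ m (l : List PTree), l ∈ forestsOf m ↔ PTree.sizeList l = m := by
  intro m
  induction m using Nat.strong_induction_on with
  | _ m ih =>
    intro l
    match m with
    | 0 =>
      constructor
      · intro h
        simp [forestsOf] at h
        simp [h, PTree.sizeList]
      · intro h
        match l with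
        | [] => simp [forestsOf]
        | t :: ts =>
          exfalso
          have := one_le_size t
          simp [PTree.sizeList] at h
          omega
    | m+1 =>
      constructor
      · intro h
        simp only [forestsOf, Finset.mem_biUnion, Finset.mem_range, Finset.mem_image,
          Finset.mem_product] at h
        obtain ⟨j, hj, ⟨t, rest⟩, ⟨⟨c, hc, rfl⟩, hrest⟩, rfl⟩ := h
        rw [Nat.min_eq_left (Nat.lt_succ_iff.mp hj)] at hc
        rw [ih j (by omega) c] at hc
        rw [ih (m - j) (by omega) rest] at hrest
        simp [PTree.sizeList, PTree.size, hc, hrest]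
        omega
      · intro h
        match l with
        | [] => simp [PTree.sizeList] at h
        | PTree.node c :: rest =>
          simp only [PTree.sizeList, PTree.size] at h
          set j := PTree.sizeList c with hj
          have hjm : j ≤ m := by omega
          have hrest : PTree.sizeList rest = m - j := by omega
          simp only [forestsOf, Finset.mem_biUnion, Finset.mem_range, Finset.mem_image,
            Finset.mem_product]
          refine ⟨j, by omega, ⟨PTree.node c, rest⟩, ⟨⟨c, ?_, rfl⟩, ?_⟩, rfl⟩
          · rw [Nat.min_eq_left hjm, ih j (by omega) c]
          · rw [ih (m - j) (by omega) rest]; exact hrest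

lemma mem_treesOf : ∀ n (t : PTree), t ∈ treesOf n ↔ t.size = n := by
  intro n t
  match n, t with
  | 0, t => simp [treesOf]; have := one_le_size t; omega
  | m+1, PTree.node c =>
    simp only [treesOf, Finset.mem_image]
    constructor
    · rintro ⟨d, hd, he⟩
      cases he
      rw [mem_forestsOf] at hd
      simp [PTree.size, hd]
    · intro h
      simp only [PTree.size] at h
      exact ⟨c, (mem_forestsOf m c).mpr (by omega), rfl⟩

/-! ### Weights -/

noncomputable def w (t : PTree) : ℚ :=
  (t.hooks.map fun (h : ℕ+) => (1 - 1 / (h : ℚ)) ^ ((h : ℕ) - 1)).prod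

noncomputable def wl (l : List PTree) : ℚ :=
  ((PTree.hooksList l).map fun (h : ℕ+) => (1 - 1 / (h : ℚ)) ^ ((h : ℕ) - 1)).prod

lemma wl_nil : wl [] = 1 := by simp [wl, PTree.hooksList]

lemma wl_cons (t : PTree) (ts : List PTree) : wl (t :: ts) = w t * wl ts := by
  simp [wl, w, PTree.hooksList, Multiset.map_add, Multiset.prod_add]

lemma w_node (cs : List PTree) :
    w (PTree.node cs) =
      (1 - 1 / ((PTree.sizeList cs : ℚ) + 1)) ^ (PTree.sizeList cs) * wl cs := by
  simp only [w, PTree.hooks, Multiset.map_cons, Multiset.prod_cons, wl]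
  erw [Multiset.map_cons, Multiset.prod_cons]
  congr 1
  norm_num [PNat.mk_ofNat]

noncomputable def gsum (m : ℕ) : ℚ := ∑ l ∈ forestsOf m, wl l
noncomputable def asum (n : ℕ) : ℚ := ∑ t ∈ treesOf n, w t

lemma gsum_zero : gsum 0 = 1 := by
  simp [gsum, forestsOf, wl_nil]

lemma asum_succ (m : ℕ) :
    asum (m+1) = (1 - 1 / ((m:ℚ)+1)) ^ m * gsum m := by
  rw [asum, treesOf, Finset.sum_image (fun a _ b _ h => by injection h)]
  rw [gsum, Finset.mul_sum]
  apply Finset.sum_congr rfl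
  intro c hc
  rw [mem_forestsOf] at hc
  rw [w_node, hc]

lemma gsum_succ (m : ℕ) :
    gsum (m+1) = ∑ j ∈ Finset.range (m+1), asum (j+1) * gsum (m-j) := by
  rw [gsum, forestsOf]
  rw [Finset.sum_biUnion]
  · apply Finset.sum_congr rfl
    intro j hj
    have hjm : j ≤ m := Nat.lt_succ_iff.mp (Finset.mem_range.mp hj)
    rw [Nat.min_eq_left hjm]
    rw [Finset.sum_image (g := fun p : PTree × List PTree => p.1 :: p.2)
      (fun p _ q _ h => by
        cases p; cases q
        simp only [List.cons.injEq] at h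
        simp [h.1, h.2])]
    rw [Finset.sum_congr rfl (fun p _ => wl_cons p.1 p.2)]
    rw [Finset.sum_product, ← Finset.sum_mul_sum]
    rw [asum, treesOf, gsum]
  · -- pairwise disjoint
    intro j₁ h1 j₂ h2 hne
    simp only [Finset.coe_range, Set.mem_Iio] at h1 h2
    apply Finset.disjoint_left.mpr
    intro x hx1 hx2
    simp only [Finset.mem_image, Finset.mem_product] at hx1 hx2
    obtain ⟨⟨t1, r1⟩, ⟨ht1, hr1⟩, rfl⟩ := hx1
    obtain ⟨⟨t2, r2⟩, ⟨ht2, hr2⟩, he⟩ := hx2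
    simp only [Finset.mem_image] at ht1 ht2
    obtain ⟨c1, hc1, rfl⟩ := ht1
    obtain ⟨c2, hc2, rfl⟩ := ht2
    rw [Nat.min_eq_left (by omega), mem_forestsOf] at hc1
    rw [Nat.min_eq_left (by omega), mem_forestsOf] at hc2
    simp only [List.cons.injEq] at he
    apply hne
    have h' : c2 = c1 := by injection he.1
    rw [← hc1, ← hc2, h']

lemma aux1 (j : ℕ) :
    (1 - 1 / ((j:ℚ)+1)) ^ j * ((j:ℚ)+1) ^ (j-1) = (j:ℚ)^j / ((j:ℚ)+1) := by
  have hj1 : (j:ℚ) + 1 ≠ 0 := by positivity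
  have h1 : (1 - 1 / ((j:ℚ)+1)) = (j:ℚ) / ((j:ℚ)+1) := by field_simp; ring
  rw [h1, div_pow]
  match j with
  | 0 => norm_num
  | k+1 =>
    rw [Nat.succ_sub_one]
    field_simp
    ring

lemma factorial_ne_zero' (k : ℕ) : ((k.factorial : ℚ)) ≠ 0 :=
  Nat.cast_ne_zero.mpr (Nat.factorial_ne_zero k)

lemma gsum_eq (m : ℕ) : gsum m = ((m:ℚ)+1)^(m-1) / (m.factorial : ℚ) := by
  induction m using Nat.strong_induction_on with
  | _ m ih =>
    match m with
    | 0 => simpa using gsum_zero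
    | m+1 =>
      rw [gsum_succ]
      have hterm : ∀ j ∈ Finset.range (m+1), asum (j+1) * gsum (m-j)
          = ((m+1).choose (j+1) : ℚ) * (j:ℚ)^j * (((m-j:ℕ):ℚ)+1)^((m-j)-1)
            / (((m+1).factorial : ℚ)) := by
        intro j hj
        have hjm : j ≤ m := Nat.lt_succ_iff.mp (Finset.mem_range.mp hj)
        rw [asum_succ, ih j (by omega), ih (m-j) (by omega)]
        have hch : ((m+1).choose (j+1) : ℚ) * (((j:ℚ)+1) * (j.factorial : ℚ))
            * (((m-j).factorial : ℚ)) = ((m+1).factorial : ℚ) := by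
          have h := Nat.choose_mul_factorial_mul_factorial
            (show j+1 ≤ m+1 by omega)
          rw [Nat.succ_sub_succ, Nat.factorial_succ] at h
          exact_mod_cast h
        have h1 : ((j:ℚ)+1) ≠ 0 := by positivity
        have h2 := factorial_ne_zero' j
        have h3 := factorial_ne_zero' (m-j)
        have h4 := factorial_ne_zero' (m+1)
        generalize hB : (((m-j:ℕ):ℚ)+1)^((m-j)-1) = B
        generalize hF1 : (j.factorial : ℚ) = F1 at hch h2 ⊢
        generalize hF2 : ((m-j).factorial : ℚ) = F2 at hch h3 ⊢
        generalize hF3 : ((m+1).factorial : ℚ) = F3 at hch h4 ⊢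
        generalize hCq : ((m+1).choose (j+1) : ℚ) = Cq at hch ⊢
        calc (1 - 1/((j:ℚ)+1))^j * (((j:ℚ)+1)^(j-1) / F1) * (B / F2)
            = ((1 - 1/((j:ℚ)+1))^j * ((j:ℚ)+1)^(j-1)) * B / (F1*F2) := by ring
          _ = ((j:ℚ)^j/((j:ℚ)+1)) * B / (F1*F2) := by rw [aux1]
          _ = Cq * (j:ℚ)^j * B / F3 := by
              field_simp
              linear_combination (-B) * hch
      rw [Finset.sum_congr rfl hterm, ← Finset.sum_div, key_identity]
      push_cast
      ring_nf

lemma asum_eq (m : ℕ) : asum (m+1) = (m:ℚ)^m / (((m+1).factorial : ℚ)) := by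
  rw [asum_succ, gsum_eq]
  calc (1 - 1/((m:ℚ)+1))^m * (((m:ℚ)+1)^(m-1) / (m.factorial : ℚ))
      = ((1 - 1/((m:ℚ)+1))^m * ((m:ℚ)+1)^(m-1)) / (m.factorial : ℚ) := by ring
    _ = ((m:ℚ)^m / ((m:ℚ)+1)) / (m.factorial : ℚ) := by rw [aux1]
    _ = (m:ℚ)^m / (((m+1).factorial : ℚ)) := by
        rw [Nat.factorial_succ]
        push_cast
        rw [div_div]

end HookAux

open HookAux in
/-- A hook length formula for plane trees. -/
theorem hook_formula_plane_trees_power (n : ℕ) (hn : 1 ≤ n) :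
    (n.factorial : ℚ) *
      ∑ᶠ T : {t : PTree // t.size = n},
        ((T : PTree).hooks.map fun (h : ℕ+) => (1 - 1 / (h : ℚ)) ^ ((h : ℕ) - 1)).prod
    = ((n : ℚ) - 1) ^ (n - 1) := by
  obtain ⟨m, rfl⟩ : ∃ m, n = m + 1 := ⟨n - 1, by omega⟩
  have hsum : ∑ᶠ T : {t : PTree // t.size = m+1},
      ((T : PTree).hooks.map fun (h : ℕ+) => (1 - 1 / (h : ℚ)) ^ ((h : ℕ) - 1)).prod
      = asum (m+1) := by
    have h0 : ∑ᶠ T : {t : PTree // t.size = m+1},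
        ((T : PTree).hooks.map fun (h : ℕ+) => (1 - 1 / (h : ℚ)) ^ ((h : ℕ) - 1)).prod
        = ∑ᶠ T : {t : PTree | t.size = m+1}, w ↑T := rfl
    rw [h0, finsum_set_coe_eq_finsum_mem, show {t : PTree | t.size = m+1}
        = ↑(treesOf (m+1)) by ext t; simp [mem_treesOf]]
    rw [finsum_mem_coe_finset]
    rfl
  rw [hsum, asum_eq]
  have h4 := factorial_ne_zero' (m+1)
  push_cast
  field_simp
  ring
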